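/- For every n ≥ 1, Σ_{σ ∈ 𝔖_n} (−1)^{inv(σ)} s^{exc(σ)} = (1 − s)^{n−1} as polynomials in s (specialization t = 1 of Theorem 1.3). -/

import Mathlib

/-- Number of excedances of a permutation. -/
def excN {n : ℕ} (σ : Equiv.Perm (Fin n)) : ℕ :=
  (Finset.univ.filter fun i : Fin n => i < σ i).card

/-- Depth of a permutation: `∑_{i : σ i > i} (σ i - i)`. -/
def depthN {n : ℕ} (σ : Equiv.Perm (Fin n)) : ℕ :=
  ∑ i ∈ Finset.univ.filter (fun i : Fin n => i < σ i), ((σ i : ℕ) - (i : ℕ))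

/-- Number of inversions of a permutation. -/
def invN {n : ℕ} (σ : Equiv.Perm (Fin n)) : ℕ :=
  (Finset.univ.filter fun p : Fin n × Fin n => p.1 < p.2 ∧ σ p.2 < σ p.1).card

section Aux

open Equiv Equiv.Perm Finset Polynomial Matrix

lemma sign_eq_signAux' {n : ℕ} (f : Perm (Fin n)) : sign f = signAux f := by
  refine swap_induction_on f ?_ ?_
  · simp [signAux_one]
  · intro f x y hxy ih
    rw [_root_.map_mul, signAux_mul, ih, sign_swap hxy, signAux_swap hxy]

lemma sign_eq_pow_invN {n : ℕ} (f : Perm (Fin n)) :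
    (sign f : ℤ) = (-1 : ℤ) ^ invN f := by
  rw [sign_eq_signAux']
  unfold signAux
  rw [Finset.prod_ite]
  simp only [Finset.prod_const, Finset.prod_const_one, mul_one]
  have hcard : ((finPairsLT n).filter fun x => f x.1 ≤ f x.2).card = invN f := by
    apply Finset.card_bij (fun a _ => ((a.2, a.1) : Fin n × Fin n))
    · rintro ⟨a1, a2⟩ ha
      simp only [Finset.mem_filter, mem_finPairsLT] at ha
      simp only [invN, Finset.mem_filter, Finset.mem_univ, true_and]
      exact ⟨ha.1, ha.2.lt_of_ne (fun h => (ne_of_gt ha.1) (f.injective h))⟩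
    · rintro ⟨a1, a2⟩ ha ⟨b1, b2⟩ hb hab
      simp only [Prod.mk.injEq] at hab
      obtain ⟨h1, h2⟩ := hab
      subst h1; subst h2; rfl
    · rintro ⟨p1, p2⟩ hp
      simp only [invN, Finset.mem_filter, Finset.mem_univ, true_and] at hp
      exact ⟨⟨p2, p1⟩, by simp [Finset.mem_filter, mem_finPairsLT, hp.1, hp.2.le], rfl⟩
  rw [hcard]
  push_cast
  simp

/-- The staircase matrix whose determinant encodes the excedance statistic. -/
noncomputable def Mn (n : ℕ) : Matrix (Fin n) (Fin n) (Polynomial ℤ) :=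
  Matrix.of fun i j => if (j : ℕ) < (i : ℕ) then X else 1

lemma detMn : ∀ n : ℕ, (Mn (n+1)).det = (1 - X) ^ n := by
  intro n
  induction n with
  | zero => simp [Matrix.det_fin_one, Mn]
  | succ n ih =>
    have h10 : (1 : Fin (n+2)) ≠ 0 := by
      simp [Fin.ext_iff]
    set N : Matrix (Fin (n+2)) (Fin (n+2)) (Polynomial ℤ) :=
      Matrix.updateRow (Mn (n+2)) 1 (Mn (n+2) 1 + (-1 : Polynomial ℤ) • Mn (n+2) 0) with hN
    have hdet : (Mn (n+2)).det = N.det :=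
      (Matrix.det_updateRow_add_smul_self (Mn (n+2)) h10 (-1)).symm
    have hrow : ∀ j : Fin (n+2), N 1 j = if (j : ℕ) = 0 then X - 1 else 0 := by
      intro j
      rw [hN, Matrix.updateRow_self]
      simp only [Pi.add_apply, Pi.smul_apply, Mn, Matrix.of_apply, smul_eq_mul]
      rw [Fin.val_zero, Fin.val_one]
      have : ¬ ((j : ℕ) < 0) := by omega
      rw [if_neg this]
      by_cases hj : (j : ℕ) = 0
      · rw [if_pos hj, if_pos (by omega)]; ring
      · rw [if_neg hj, if_neg (by omega : ¬ ((j:ℕ) < 1))]; ring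
    have hval : ∀ i' : Fin (n+1), (((1 : Fin (n+2)).succAbove i') : ℕ)
        = if (i' : ℕ) = 0 then 0 else (i' : ℕ) + 1 := by
      intro i'
      by_cases h : (i' : ℕ) = 0
      · rw [if_pos h, Fin.succAbove_of_castSucc_lt]
        · simp [h]
        · simp [Fin.lt_def, h]
      · rw [if_neg h, Fin.succAbove_of_le_castSucc]
        · simp
        · simp [Fin.le_def]; omega
    have hsub : N.submatrix ((1 : Fin (n+2)).succAbove) ((0 : Fin (n+2)).succAbove)
        = Mn (n+1) := by
      apply Matrix.ext; intro i' j'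
      rw [Matrix.submatrix_apply, Fin.succAbove_zero, hN,
        Matrix.updateRow_ne (Fin.succAbove_ne 1 i')]
      show (if ((j'.succ : Fin (n+2)) : ℕ) < (((1 : Fin (n+2)).succAbove i') : ℕ)
        then (X : Polynomial ℤ) else 1) = _
      rw [hval]
      simp only [Fin.val_succ, Mn, Matrix.of_apply]
      by_cases h : (i' : ℕ) = 0
      · rw [if_pos h, if_neg (by omega), if_neg (by omega)]
      · rw [if_neg h]
        by_cases h2 : (j' : ℕ) < (i' : ℕ)
        · rw [if_pos (by omega), if_pos h2]
        · rw [if_neg (by omega), if_neg h2]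
    rw [hdet, Matrix.det_succ_row N 1, Finset.sum_eq_single (0 : Fin (n+2))]
    · rw [hsub, ih, hrow 0]
      simp only [Fin.val_zero, if_pos rfl, Fin.val_one, add_zero, pow_one, if_true]
      ring
    · intro j _ hj
      rw [hrow j, if_neg (show ¬ ((j : ℕ) = 0) from fun h => hj (Fin.ext h))]
      ring
    · intro h; exact absurd (Finset.mem_univ _) h

end Aux

open Polynomial in
/-- `∑_σ (−1)^{inv σ} s^{exc σ} = (1 − s)^{n−1}` in `ℤ[s]`. -/
theorem sign_imbalance_exc (n : ℕ) (hn : 1 ≤ n) :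
    ∑ σ : Equiv.Perm (Fin n), (C ((-1 : ℤ) ^ invN σ) * X ^ excN σ : Polynomial ℤ) =
      (1 - X) ^ (n - 1) := by
  obtain ⟨m, rfl⟩ : ∃ m, n = m + 1 := ⟨n - 1, (Nat.succ_pred_eq_of_pos hn).symm⟩
  have hdet := detMn m
  rw [Matrix.det_apply'] at hdet
  rw [show m + 1 - 1 = m from rfl, ← hdet]
  refine Finset.sum_congr rfl fun σ _ => ?_
  have hprod : (∏ i, Mn (m+1) (σ i) i) = X ^ excN σ := by
    show (∏ i : Fin (m+1), if (i : ℕ) < ((σ i : Fin (m+1)) : ℕ) then (X : Polynomial ℤ) else 1)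
      = X ^ excN σ
    rw [Finset.prod_ite, Finset.prod_const, Finset.prod_const_one, mul_one]
    congr 1
  rw [hprod, sign_eq_pow_invN σ, map_pow, map_neg, map_one]
  push_cast
  ring
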